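/- Let A(t) be a sequence of cut-balanced row-stochastic n×n matrices with positive entries uniformly bounded below by α > 0 and diagonal entries bounded below by β > 0, driving x(t+1) = A(t)x(t). Let G = (V, E) be the digraph with (j,i) ∈ E iff a_{ij}(t) > 0 for infinitely many t. If nodes i and j lie in the same strongly connected component of G, then lim x_i(t) = lim x_j(t). -/

import Mathlib

open Filter

namespace CutBalancedProof


variable {n : ℕ}

/-- entrywise nonneg product -/
lemma list_prod_nonneg (L : List (Matrix (Fin n) (Fin n) ℝ))
    (h : ∀ M ∈ L, ∀ i j, 0 ≤ M i j) : ∀ i j, 0 ≤ L.prod i j := by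
  induction L with
  | nil =>
    intro i j
    simp [Matrix.one_apply]
    split <;> norm_num
  | cons M L ih =>
    intro i j
    rw [List.prod_cons, Matrix.mul_apply]
    refine Finset.sum_nonneg fun k _ => mul_nonneg (h M (by simp) i k) ?_
    exact ih (fun M hM => h M (by simp [hM])) k j

lemma list_prod_rowsum (L : List (Matrix (Fin n) (Fin n) ℝ))
    (h : ∀ M ∈ L, ∀ i, ∑ j, M i j = 1) : ∀ i, ∑ j, L.prod i j = 1 := by
  induction L with
  | nil => intro i; simp [Matrix.one_apply]
  | cons M L ih =>
    intro i
    have ih' := ih (fun M hM i => h M (by simp [hM]) i)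
    simp only [List.prod_cons, Matrix.mul_apply]
    rw [Finset.sum_comm]
    calc (∑ k, ∑ j, M i k * L.prod k j) = ∑ k, M i k * ∑ j, L.prod k j := by
          simp [Finset.mul_sum]
      _ = 1 := by simp only [ih', mul_one]; exact h M (by simp) i

/-- backward product `A (s-1) * ⋯ * A t` -/
def bprod (A : ℕ → Matrix (Fin n) (Fin n) ℝ) (t s : ℕ) : Matrix (Fin n) (Fin n) ℝ :=
  ((List.range (s - t)).map fun k => A (s - 1 - k)).prod

lemma bprod_self (A : ℕ → Matrix (Fin n) (Fin n) ℝ) {t s : ℕ} (h : s ≤ t) :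
    bprod A t s = 1 := by
  have : s - t = 0 := by omega
  simp [bprod, this]

lemma bprod_succ (A : ℕ → Matrix (Fin n) (Fin n) ℝ) {t s : ℕ} (h : t < s) :
    bprod A t s = bprod A (t+1) s * A t := by
  have h1 : s - t = (s - (t+1)) + 1 := by omega
  have h2 : s - 1 - (s - (t+1)) = t := by omega
  rw [bprod, h1, List.range_succ, List.map_append, List.prod_append]
  simp [bprod, h2]

/-- column sums of the backward product -/
def csum (A : ℕ → Matrix (Fin n) (Fin n) ℝ) (t s : ℕ) (j : Fin n) : ℝ :=
  ∑ i, bprod A t s i j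

lemma csum_self (A : ℕ → Matrix (Fin n) (Fin n) ℝ) {t s : ℕ} (h : s ≤ t) (j : Fin n) :
    csum A t s j = 1 := by
  simp [csum, bprod_self A h, Matrix.one_apply]

lemma bprod_nonneg {A : ℕ → Matrix (Fin n) (Fin n) ℝ} (hnonneg : ∀ t i j, 0 ≤ A t i j)
    (t s : ℕ) (i j : Fin n) : 0 ≤ bprod A t s i j :=
  list_prod_nonneg _ (by
    intro M hM i j
    simp only [List.mem_map] at hM
    obtain ⟨k, _, rfl⟩ := hM
    exact hnonneg _ i j) i j

lemma bprod_rowsum {A : ℕ → Matrix (Fin n) (Fin n) ℝ} (hrow : ∀ t i, ∑ j, A t i j = 1)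
    (t s : ℕ) (i : Fin n) : ∑ j, bprod A t s i j = 1 :=
  list_prod_rowsum _ (by
    intro M hM i
    simp only [List.mem_map] at hM
    obtain ⟨k, _, rfl⟩ := hM
    exact hrow _ i) i

lemma csum_nonneg {A : ℕ → Matrix (Fin n) (Fin n) ℝ} (hnonneg : ∀ t i j, 0 ≤ A t i j)
    (t s : ℕ) (j : Fin n) : 0 ≤ csum A t s j :=
  Finset.sum_nonneg fun i _ => bprod_nonneg hnonneg t s i j

lemma csum_total {A : ℕ → Matrix (Fin n) (Fin n) ℝ} (hrow : ∀ t i, ∑ j, A t i j = 1)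
    (t s : ℕ) : ∑ j, csum A t s j = (n : ℝ) := by
  simp only [csum]
  rw [Finset.sum_comm]
  simp [bprod_rowsum hrow]

lemma csum_rec {A : ℕ → Matrix (Fin n) (Fin n) ℝ} {t s : ℕ} (h : t < s) (j : Fin n) :
    csum A t s j = ∑ k, csum A (t+1) s k * A t k j := by
  simp only [csum, bprod_succ A h, Matrix.mul_apply]
  rw [Finset.sum_comm]
  simp [Finset.sum_mul]




lemma nat_aux (m k : ℕ) (hm : 1 ≤ m) : m + k ≤ m * 2 ^ k := by
  induction k with
  | zero => simp
  | succ k ih =>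
    have h1 : 1 ≤ m * 2 ^ k := Nat.one_le_iff_ne_zero.mpr (by positivity)
    calc m + (k+1) ≤ m * 2^k + 1 := by omega
      _ ≤ m * 2^k + m * 2^k := by omega
      _ = m * 2^(k+1) := by ring

lemma card_bound {m k : ℕ} (hm : 1 ≤ m) (γ : ℝ) (hγpos : 0 < γ) (hγhalf : γ ≤ 1/2)
    (hn : n = m + k) : (n : ℝ) * γ ^ k ≤ m := by
  have h1 : γ ^ k ≤ (1/2 : ℝ) ^ k := pow_le_pow_left₀ hγpos.le hγhalf k
  have h2 : (n : ℝ) * γ ^ k ≤ (n : ℝ) * (1/2)^k := by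
    apply mul_le_mul_of_nonneg_left h1 (by positivity)
  refine h2.trans ?_
  have h3 : ((1:ℝ)/2)^k = ((2:ℝ)^k)⁻¹ := by
    rw [one_div, inv_pow]
  rw [h3, mul_inv_le_iff₀ (by positivity)]
  have := nat_aux m k hm
  calc (n:ℝ) = ((m + k : ℕ) : ℝ) := by rw [hn]
    _ ≤ ((m * 2^k : ℕ) : ℝ) := by exact_mod_cast this
    _ = (m:ℝ) * 2^k := by push_cast; ring

lemma csum_lower
    (A : ℕ → Matrix (Fin n) (Fin n) ℝ)
    (hnonneg : ∀ t i j, 0 ≤ A t i j)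
    (hrow : ∀ t i, ∑ j, A t i j = 1)
    (α : ℝ) (hlb : ∀ t i j, 0 < A t i j → α ≤ A t i j)
    (β : ℝ) (hdiag : ∀ t i, β ≤ A t i i)
    (hcb : ∀ t, ∀ S : Set (Fin n), S.Nonempty → S ≠ Set.univ →
      ((∃ i ∈ S, ∃ j ∉ S, 0 < A t i j) ↔ (∃ i ∈ S, ∃ j ∉ S, 0 < A t j i)))
    (γ : ℝ) (hγpos : 0 < γ) (hγhalf : γ ≤ 1/2) (hγα : γ ≤ α) (hγβ : γ ≤ β) :
    ∀ d t (I : Finset (Fin n)), I.Nonempty →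
      (n : ℝ) * γ ^ (n - I.card) ≤ ∑ j ∈ I, csum A t (t + d) j := by
  intro d
  induction d with
  | zero =>
    intro t I hI
    have : ∀ j ∈ I, csum A t (t+0) j = 1 := fun j _ => csum_self A (by omega) j
    rw [Finset.sum_congr rfl this]
    rw [Finset.sum_const, nsmul_eq_mul, mul_one]
    exact card_bound hI.card_pos γ hγpos hγhalf
      (by have := I.card_le_univ; simp at this; omega)
  | succ d ih =>
    intro t I hI
    have hts : t < t + (d+1) := by omega
    have hrec : ∀ j, csum A t (t+(d+1)) j = ∑ k, csum A (t+1) (t+(d+1)) k * A t k j :=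
      fun j => csum_rec hts j
    have hshift : t + (d+1) = (t+1) + d := by omega
    -- abbreviation for next-step csum
    set c' : Fin n → ℝ := fun k => csum A (t+1) (t+(d+1)) k with hc'
    have hc'nonneg : ∀ k, 0 ≤ c' k := fun k => csum_nonneg hnonneg _ _ k
    have ihI : ∀ (J : Finset (Fin n)), J.Nonempty → (n:ℝ) * γ ^ (n - J.card) ≤ ∑ k ∈ J, c' k := by
      intro J hJ
      have := ih (t+1) J hJ
      rwa [← hshift] at this
    -- rewrite the sum
    have hsum : ∑ j ∈ I, csum A t (t+(d+1)) j
        = ∑ k, c' k * (∑ j ∈ I, A t k j) := by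
      rw [Finset.sum_congr rfl fun j _ => hrec j, Finset.sum_comm]
      simp [Finset.mul_sum, hc']
    rw [hsum]
    by_cases huniv : I = Finset.univ
    · -- total conservation
      subst huniv
      have : ∀ k : Fin n, c' k * (∑ j : Fin n, A t k j) = c' k := by
        intro k; rw [hrow t k, mul_one]
      rw [Finset.sum_congr rfl fun k _ => this k]
      rw [show (∑ k, c' k) = (n:ℝ) from csum_total hrow _ _]
      have hc : (Finset.univ : Finset (Fin n)).card = n := by simp
      simp [hc]
    · -- proper nonempty subset: use cut balance
      have hSne : (I : Set (Fin n)).Nonempty := by exact_mod_cast hI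
      have hSuniv : (I : Set (Fin n)) ≠ Set.univ := by
        intro h
        apply huniv
        apply Finset.coe_injective
        simp [h]
      by_cases hL : ∃ i ∈ (I : Set (Fin n)), ∃ j ∉ (I : Set (Fin n)), 0 < A t i j
      · -- case (b): flow both ways
        obtain ⟨i', hi', j', hj', hji'⟩ := (hcb t I hSne hSuniv).mp hL
        have hi'I : i' ∈ I := hi'
        have hj'I : j' ∉ I := hj'
        -- bound each weight
        have hw : ∀ k ∈ insert j' I, γ ≤ ∑ j ∈ I, A t k j := by
          intro k hk
          rcases Finset.mem_insert.mp hk with rfl | hkI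
          · refine hγα.trans ((hlb t k i' hji').trans ?_)
            exact Finset.single_le_sum (fun j _ => hnonneg t k j) hi'I
          · refine hγβ.trans ((hdiag t k).trans ?_)
            exact Finset.single_le_sum (fun j _ => hnonneg t k j) hkI
        have step1 : ∑ k ∈ insert j' I, c' k * (∑ j ∈ I, A t k j) ≤
            ∑ k, c' k * (∑ j ∈ I, A t k j) := by
          apply Finset.sum_le_sum_of_subset_of_nonneg (Finset.subset_univ _)
          intro k _ _
          exact mul_nonneg (hc'nonneg k) (Finset.sum_nonneg fun j _ => hnonneg t k j)
        have step2 : γ * ∑ k ∈ insert j' I, c' k ≤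
            ∑ k ∈ insert j' I, c' k * (∑ j ∈ I, A t k j) := by
          rw [Finset.mul_sum]
          apply Finset.sum_le_sum
          intro k hk
          calc γ * c' k = c' k * γ := by ring
            _ ≤ c' k * ∑ j ∈ I, A t k j := mul_le_mul_of_nonneg_left (hw k hk) (hc'nonneg k)
        have hcard : (insert j' I).card = I.card + 1 := Finset.card_insert_of_notMem hj'I
        have step3 : (n:ℝ) * γ ^ (n - (I.card + 1)) ≤ ∑ k ∈ insert j' I, c' k := by
          have := ihI (insert j' I) (Finset.insert_nonempty _ _)
          rwa [hcard] at this
        have hcardlt : I.card < n := by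
          have h1 : I.card ≤ n := by have := I.card_le_univ; simpa using this
          rcases h1.lt_or_eq with h | h
          · exact h
          · exfalso
            apply huniv
            apply Finset.eq_univ_of_card
            simpa using h
        have hpow : γ ^ (n - I.card) = γ * γ ^ (n - (I.card + 1)) := by
          have : n - I.card = (n - (I.card + 1)) + 1 := by omega
          rw [this, pow_succ]; ring
        calc (n:ℝ) * γ ^ (n - I.card) = γ * ((n:ℝ) * γ ^ (n - (I.card+1))) := by
              rw [hpow]; ring
          _ ≤ γ * ∑ k ∈ insert j' I, c' k := by
              exact mul_le_mul_of_nonneg_left step3 hγpos.le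
          _ ≤ _ := step2.trans step1
      · -- case (a): no flow at all across the cut; exact conservation on I
        have hR : ¬ ∃ i ∈ (I : Set (Fin n)), ∃ j ∉ (I : Set (Fin n)), 0 < A t j i :=
          fun h => hL ((hcb t I hSne hSuniv).mpr h)
        push_neg at hL hR
        -- weights: 1 on I, 0 off I
        have hwI : ∀ k ∈ I, ∑ j ∈ I, A t k j = 1 := by
          intro k hk
          rw [Finset.sum_subset (Finset.subset_univ I)]
          · exact hrow t k
          · intro j _ hjI
            exact le_antisymm (hL k (by exact_mod_cast hk) j (by exact_mod_cast hjI)) (hnonneg t k j)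
        have hwO : ∀ k, k ∉ I → c' k * (∑ j ∈ I, A t k j) = 0 := by
          intro k hk
          have : ∑ j ∈ I, A t k j = 0 := by
            apply Finset.sum_eq_zero
            intro j hj
            exact le_antisymm (hR j (by exact_mod_cast hj) k (by exact_mod_cast hk)) (hnonneg t k j)
          rw [this, mul_zero]
        have : ∑ k, c' k * (∑ j ∈ I, A t k j) = ∑ k ∈ I, c' k := by
          rw [← Finset.sum_subset (Finset.subset_univ I) (fun k _ hk => hwO k hk)]
          apply Finset.sum_congr rfl
          intro k hk
          rw [hwI k hk, mul_one]
        rw [this]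
        exact ihI I hI

lemma pi_exists
    (A : ℕ → Matrix (Fin n) (Fin n) ℝ)
    (hnonneg : ∀ t i j, 0 ≤ A t i j)
    (hrow : ∀ t i, ∑ j, A t i j = 1)
    (γ : ℝ)
    (hlow : ∀ t s (j : Fin n), t ≤ s → (n : ℝ) * γ ^ (n - 1) ≤ csum A t s j) :
    ∃ π : ℕ → Fin n → ℝ,
      (∀ t j, (n:ℝ) * γ ^ (n-1) ≤ π t j) ∧
      (∀ t j, π t j = ∑ k, π (t+1) k * A t k j) ∧
      (∀ t, ∑ j, π t j = (n:ℝ)) := by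
  obtain ⟨U, hU⟩ := Ultrafilter.exists_le (atTop : Filter ℕ)
  have hmem : ∀ t (j : Fin n) s, csum A t s j ∈ Set.Icc (0:ℝ) n := by
    intro t j s
    constructor
    · exact csum_nonneg hnonneg t s j
    · calc csum A t s j ≤ ∑ j', csum A t s j' :=
            Finset.single_le_sum (fun j' _ => csum_nonneg hnonneg t s j') (Finset.mem_univ j)
        _ = (n:ℝ) := csum_total hrow t s
  have key : ∀ t (j : Fin n), ∃ a : ℝ, Tendsto (fun s => csum A t s j) (↑U) (nhds a) := by
    intro t j
    have hle : ↑(U.map (fun s => csum A t s j)) ≤ 𝓟 (Set.Icc (0:ℝ) n) := by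
      rw [Filter.le_principal_iff]
      exact Filter.mem_map.mpr (Filter.univ_mem' (fun s => hmem t j s))
    obtain ⟨a, _, ha⟩ := isCompact_Icc.ultrafilter_le_nhds (U.map (fun s => csum A t s j)) hle
    exact ⟨a, by rwa [Filter.Tendsto, ← Ultrafilter.coe_map]⟩
  choose π hπ using key
  refine ⟨π, ?_, ?_, ?_⟩
  · intro t j
    refine ge_of_tendsto (hπ t j) ?_
    have hev : ∀ᶠ s in (atTop : Filter ℕ), (n:ℝ) * γ ^ (n-1) ≤ csum A t s j := by
      filter_upwards [eventually_ge_atTop t] with s hs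
      exact hlow t s j hs
    exact hU hev
  · intro t j
    have h1 : Tendsto (fun s => ∑ k, csum A (t+1) s k * A t k j) (↑U)
        (nhds (∑ k, π (t+1) k * A t k j)) := by
      apply tendsto_finset_sum
      intro k _
      exact (hπ (t+1) k).mul_const _
    have heq : (fun s => csum A t s j) =ᶠ[(↑U : Filter ℕ)]
        (fun s => ∑ k, csum A (t+1) s k * A t k j) := by
      apply hU
      filter_upwards [eventually_ge_atTop (t+1)] with s hs
      exact csum_rec (by omega) j
    exact tendsto_nhds_unique (hπ t j) (h1.congr' heq.symm)
  · intro t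
    have h1 : Tendsto (fun s => ∑ j, csum A t s j) (↑U) (nhds (∑ j, π t j)) :=
      tendsto_finset_sum _ (fun j _ => hπ t j)
    have h2 : Tendsto (fun s => ∑ j, csum A t s j) (↑U) (nhds (n:ℝ)) := by
      have : (fun s => ∑ j, csum A t s j) = fun _ => (n:ℝ) := by
        funext s; exact csum_total hrow t s
      rw [this]; exact tendsto_const_nhds
    exact tendsto_nhds_unique h1 h2



def slk (A : ℕ → Matrix (Fin n) (Fin n) ℝ) (x : ℕ → Fin n → ℝ) (c : ℝ) (t : ℕ) (i : Fin n) : ℝ :=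
  (∑ j, A t i j * max (x t j - c) 0) - max (x (t+1) i - c) 0

def gfn (π : ℕ → Fin n → ℝ) (x : ℕ → Fin n → ℝ) (c : ℝ) (t : ℕ) : ℝ :=
  ∑ i, π t i * max (x t i - c) 0

section
variable {A : ℕ → Matrix (Fin n) (Fin n) ℝ} {x : ℕ → Fin n → ℝ} {π : ℕ → Fin n → ℝ} {p : ℝ}
variable (hnonneg : ∀ t i j, 0 ≤ A t i j) (hrow : ∀ t i, ∑ j, A t i j = 1)
variable (hx : ∀ t i, x (t+1) i = ∑ j, A t i j * x t j)
variable (hπlb : ∀ t j, p ≤ π t j) (hp : 0 < p)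
variable (hπrec : ∀ t j, π t j = ∑ k, π (t+1) k * A t k j)

include hrow hx in
lemma row_affine (t : ℕ) (i : Fin n) (c : ℝ) :
    x (t+1) i - c = ∑ j, A t i j * (x t j - c) := by
  simp only [mul_sub, Finset.sum_sub_distrib, ← Finset.sum_mul, hrow t i, hx t i, one_mul]

include hnonneg hrow hx in
lemma slk_nonneg (c : ℝ) (t : ℕ) (i : Fin n) : 0 ≤ slk A x c t i := by
  rw [slk, sub_nonneg]
  apply max_le
  · rw [row_affine hrow hx t i c]
    apply Finset.sum_le_sum
    intro j _
    exact mul_le_mul_of_nonneg_left (le_max_left _ _) (hnonneg t i j)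
  · exact Finset.sum_nonneg fun j _ => mul_nonneg (hnonneg t i j) (le_max_right _ _)

include hnonneg in
lemma slk_lb1 {c : ℝ} {t : ℕ} {i : Fin n} (h : x (t+1) i ≤ c) (j : Fin n) :
    A t i j * max (x t j - c) 0 ≤ slk A x c t i := by
  rw [slk, show max (x (t+1) i - c) 0 = 0 from max_eq_right (by linarith), sub_zero]
  exact Finset.single_le_sum (f := fun j' => A t i j' * max (x t j' - c) 0)
    (fun j' _ => mul_nonneg (hnonneg t i j') (le_max_right _ _)) (Finset.mem_univ j)

include hnonneg hrow hx in
lemma slk_lb2 {c : ℝ} {t : ℕ} {i : Fin n} (h : c ≤ x (t+1) i) (j : Fin n) :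
    A t i j * max (c - x t j) 0 ≤ slk A x c t i := by
  have hid : slk A x c t i = ∑ j', A t i j' * max (c - x t j') 0 := by
    rw [slk, show max (x (t+1) i - c) 0 = x (t+1) i - c from max_eq_left (by linarith),
      row_affine hrow hx t i c, ← Finset.sum_sub_distrib]
    apply Finset.sum_congr rfl
    intro j' _
    rw [← mul_sub]
    congr 1
    rcases le_total (x t j' - c) 0 with h' | h'
    · rw [max_eq_right h', max_eq_left (by linarith)]; ring
    · rw [max_eq_left h', max_eq_right (by linarith)]; ring
  rw [hid]
  exact Finset.single_le_sum (f := fun j' => A t i j' * max (c - x t j') 0)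
    (fun j' _ => mul_nonneg (hnonneg t i j') (le_max_right _ _)) (Finset.mem_univ j)

include hπrec in
lemma g_drop (c : ℝ) (t : ℕ) :
    gfn π x c t - gfn π x c (t+1) = ∑ i, π (t+1) i * slk A x c t i := by
  simp only [gfn, slk, mul_sub, Finset.sum_sub_distrib]
  congr 1
  have hpt : ∀ i, π t i * max (x t i - c) 0
      = ∑ k, π (t+1) k * (A t k i * max (x t i - c) 0) := by
    intro i
    rw [hπrec t i, Finset.sum_mul]
    apply Finset.sum_congr rfl
    intro k _
    ring
  rw [Finset.sum_congr rfl (fun i _ => hpt i), Finset.sum_comm]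
  apply Finset.sum_congr rfl
  intro k _
  rw [Finset.mul_sum]

include hnonneg hrow hx hπrec hπlb hp in
lemma g_step_le (c : ℝ) (t : ℕ) : gfn π x c (t+1) ≤ gfn π x c t := by
  have h := g_drop (A := A) (x := x) hπrec c t
  have h2 : 0 ≤ ∑ i, π (t+1) i * slk A x c t i :=
    Finset.sum_nonneg fun i _ =>
      mul_nonneg (hp.le.trans (hπlb (t+1) i)) (slk_nonneg hnonneg hrow hx c t i)
  linarith

include hπlb hp in
lemma g_nonneg (c : ℝ) (t : ℕ) : 0 ≤ gfn π x c t :=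
  Finset.sum_nonneg fun i _ => mul_nonneg (hp.le.trans (hπlb t i)) (le_max_right _ _)

include hnonneg hrow hx hπrec hπlb hp in
lemma g_tendsto (c : ℝ) : ∃ L, Tendsto (gfn π x c) atTop (nhds L) := by
  refine ⟨_, tendsto_atTop_ciInf
    (antitone_nat_of_succ_le fun t => g_step_le hnonneg hrow hx hπlb hp hπrec c t) ?_⟩
  exact ⟨0, fun y ⟨t, ht⟩ => ht ▸ g_nonneg hπlb hp c t⟩

include hnonneg hrow hx hπrec hπlb hp in
lemma slk_tendsto_zero (c : ℝ) (i : Fin n) :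
    Tendsto (fun t => slk A x c t i) atTop (nhds 0) := by
  obtain ⟨L, hL⟩ := g_tendsto (A := A) hnonneg hrow hx hπlb hp hπrec c
  have hL1 : Tendsto (fun t => gfn π x c (t+1)) atTop (nhds L) :=
    hL.comp (tendsto_add_atTop_nat 1)
  have hdiff : Tendsto (fun t => (gfn π x c t - gfn π x c (t+1)) / p) atTop (nhds 0) := by
    have := (hL.sub hL1).div_const p
    simpa using this
  apply squeeze_zero (fun t => slk_nonneg hnonneg hrow hx c t i) _ hdiff
  intro t
  rw [le_div_iff₀ hp, mul_comm]
  calc p * slk A x c t i ≤ π (t+1) i * slk A x c t i :=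
        mul_le_mul_of_nonneg_right (hπlb (t+1) i) (slk_nonneg hnonneg hrow hx c t i)
    _ ≤ ∑ i', π (t+1) i' * slk A x c t i' :=
        Finset.single_le_sum (fun i' _ => mul_nonneg (hp.le.trans (hπlb (t+1) i'))
          (slk_nonneg hnonneg hrow hx c t i')) (Finset.mem_univ i)
    _ = gfn π x c t - gfn π x c (t+1) := (g_drop (A := A) (x := x) hπrec c t).symm

end


lemma node_converges
    {A : ℕ → Matrix (Fin n) (Fin n) ℝ} {x : ℕ → Fin n → ℝ} {π : ℕ → Fin n → ℝ} {p : ℝ}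
    (hnonneg : ∀ t i j, 0 ≤ A t i j) (hrow : ∀ t i, ∑ j, A t i j = 1)
    (β : ℝ) (hβ : 0 < β) (hdiag : ∀ t i, β ≤ A t i i)
    (hx : ∀ t i, x (t+1) i = ∑ j, A t i j * x t j)
    (hπlb : ∀ t j, p ≤ π t j) (hp : 0 < p)
    (hπrec : ∀ t j, π t j = ∑ k, π (t+1) k * A t k j)
    (hπtot : ∀ t, ∑ j, π t j = (n:ℝ))
    (i : Fin n) :
    ∃ L, Tendsto (fun t => x t i) atTop (nhds L) := by
  classical
  have hπ0 : ∀ t j, 0 ≤ π t j := fun t j => hp.le.trans (hπlb t j)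
  -- uniform bound on the states
  obtain ⟨R, hbnd⟩ : ∃ R : ℝ, ∀ (t : ℕ) (j : Fin n), |x t j| ≤ R := by
    refine ⟨Finset.univ.sup' ⟨i, Finset.mem_univ i⟩ (fun j => |x 0 j|), ?_⟩
    intro t
    induction t with
    | zero => intro j; exact Finset.le_sup' (fun j => |x 0 j|) (Finset.mem_univ j)
    | succ t ih =>
      intro j
      rw [hx t j]
      calc |∑ k, A t j k * x t k| ≤ ∑ k, |A t j k * x t k| :=
            Finset.abs_sum_le_sum_abs _ _
        _ ≤ ∑ k, A t j k * Finset.univ.sup' ⟨i, Finset.mem_univ i⟩ (fun j => |x 0 j|) := by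
            apply Finset.sum_le_sum
            intro k _
            rw [abs_mul, abs_of_nonneg (hnonneg t j k)]
            exact mul_le_mul_of_nonneg_left (ih k) (hnonneg t j k)
        _ = _ := by rw [← Finset.sum_mul, hrow t j, one_mul]
  have hble : IsBoundedUnder (· ≤ ·) atTop (fun t => x t i) :=
    isBoundedUnder_of ⟨R, fun t => (abs_le.mp (hbnd t i)).2⟩
  have hbge : IsBoundedUnder (· ≥ ·) atTop (fun t => x t i) :=
    isBoundedUnder_of ⟨-R, fun t => (abs_le.mp (hbnd t i)).1⟩
  set s : ℝ := liminf (fun t => x t i) atTop with hs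
  set r : ℝ := limsup (fun t => x t i) atTop with hr
  have hsr : s ≤ r := liminf_le_limsup hble hbge
  rcases eq_or_lt_of_le hsr with heq | hlt
  · exact ⟨r, tendsto_of_liminf_eq_limsup heq rfl hble hbge⟩
  exfalso
  have hslk0 : ∀ c, Tendsto (fun t => slk A x c t i) atTop (nhds 0) :=
    fun c => slk_tendsto_zero hnonneg hrow hx hπlb hp hπrec c i
  -- the band-visiting lemma
  have hband : ∀ u v : ℝ, s < u → u < v → v < r →
      ∃ᶠ t in atTop, (u ≤ x t i ∧ x t i ≤ v) := by
    intro u v hu huv hv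
    by_contra hnot
    rw [Filter.not_frequently] at hnot
    obtain ⟨T, hT⟩ := eventually_atTop.1 hnot
    have hflow : ∃ᶠ t in atTop, x t i < u :=
      frequently_lt_of_liminf_lt hble.isCoboundedUnder_ge hu
    have hfhigh : ∃ᶠ t in atTop, v < x t i :=
      frequently_lt_of_lt_limsup hbge.isCoboundedUnder_le hv
    have hjump : ∀ N, ∃ τ, N ≤ τ ∧ x τ i < u ∧ v ≤ x (τ+1) i := by
      intro N
      obtain ⟨t1, ht1ge, ht1⟩ := (frequently_atTop.1 hflow) (max N T)
      obtain ⟨t2, ht2ge, ht2⟩ := (frequently_atTop.1 hfhigh) (t1+1)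
      have hPex : ∃ m, t1 < m ∧ v < x m i := ⟨t2, by omega, ht2⟩
      set t2' := Nat.find hPex with ht2'def
      obtain ⟨ht2'gt, ht2'v⟩ := Nat.find_spec hPex
      set τ := t2' - 1 with hτ
      have hτ1 : τ + 1 = t2' := by omega
      have hτge : t1 ≤ τ := by omega
      refine ⟨τ, by omega, ?_, by rw [hτ1]; exact ht2'v.le⟩
      rcases eq_or_lt_of_le hτge with hcase | hcase
      · rwa [← hcase]
      · have hmin : ¬(t1 < τ ∧ v < x τ i) := Nat.find_min hPex (by omega)
        have hτv : ¬ (v < x τ i) := fun h => hmin ⟨hcase, h⟩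
        have := hT τ (by omega)
        rcases lt_or_ge (x τ i) u with h | h
        · exact h
        · exact absurd ⟨h, not_lt.1 hτv⟩ this
    have hfr : ∃ᶠ τ in atTop, β * (v - u) ≤ slk A x v τ i := by
      rw [frequently_atTop]
      intro N
      obtain ⟨τ, hτN, hτu, hτv⟩ := hjump N
      refine ⟨τ, hτN, ?_⟩
      calc β * (v - u) ≤ A τ i i * max (v - x τ i) 0 := by
            apply mul_le_mul (hdiag τ i) _ (by linarith) ((hβ.trans_le (hdiag τ i)).le)
            exact le_max_of_le_left (by linarith)
        _ ≤ slk A x v τ i := slk_lb2 hnonneg hrow hx hτv i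
    have hev : ∀ᶠ τ in atTop, slk A x v τ i < β * (v - u) :=
      (hslk0 v).eventually_lt_const (by nlinarith)
    obtain ⟨τ, h1, h2⟩ := (hfr.and_eventually hev).exists
    linarith
  -- masses
  set Nm : ℝ → ℕ → ℝ := fun w t => ∑ j ∈ Finset.univ.filter (fun j => w ≤ x t j), π t j
    with hNm
  set Nm' : ℝ → ℕ → ℝ := fun w t => ∑ j ∈ Finset.univ.filter (fun j => w < x t j), π t j
    with hNm'
  have hgsplit : ∀ (u v : ℝ) t, gfn π x u t - gfn π x v t
      = ∑ j, π t j * (max (x t j - u) 0 - max (x t j - v) 0) := by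
    intro u v t
    simp [gfn, mul_sub, Finset.sum_sub_distrib]
  have hbl : ∀ u v : ℝ, u ≤ v → ∀ t, (v - u) * Nm v t ≤ gfn π x u t - gfn π x v t := by
    intro u v huv t
    rw [hgsplit u v t, hNm, Finset.mul_sum]
    calc ∑ j ∈ Finset.univ.filter (fun j => v ≤ x t j), (v - u) * π t j
        ≤ ∑ j ∈ Finset.univ.filter (fun j => v ≤ x t j),
            π t j * (max (x t j - u) 0 - max (x t j - v) 0) := by
          apply Finset.sum_le_sum
          intro j hj
          have hvx : v ≤ x t j := (Finset.mem_filter.1 hj).2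
          rw [max_eq_left (by linarith), max_eq_left (by linarith)]
          rw [show x t j - u - (x t j - v) = v - u by ring, mul_comm]
      _ ≤ _ := by
          apply Finset.sum_le_sum_of_subset_of_nonneg (Finset.filter_subset _ _)
          intro j _ _
          apply mul_nonneg (hπ0 t j)
          rw [sub_nonneg]
          exact max_le_max (by linarith) le_rfl
  have hbh : ∀ u v : ℝ, u ≤ v → ∀ t, gfn π x u t - gfn π x v t ≤ (v - u) * Nm' u t := by
    intro u v huv t
    rw [hgsplit u v t, hNm', Finset.mul_sum]
    rw [← Finset.sum_filter_add_sum_filter_not Finset.univ (fun j => u < x t j)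
      (fun j => π t j * (max (x t j - u) 0 - max (x t j - v) 0))]
    have hzero : ∑ j ∈ Finset.univ.filter (fun j => ¬ u < x t j),
        π t j * (max (x t j - u) 0 - max (x t j - v) 0) = 0 := by
      apply Finset.sum_eq_zero
      intro j hj
      have hxu : x t j ≤ u := not_lt.1 (Finset.mem_filter.1 hj).2
      rw [max_eq_right (by linarith), max_eq_right (by linarith)]
      ring
    rw [hzero, add_zero]
    apply Finset.sum_le_sum
    intro j hj
    have hux : u < x t j := (Finset.mem_filter.1 hj).2
    rw [mul_comm ((v : ℝ) - u) (π t j)]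
    apply mul_le_mul_of_nonneg_left _ (hπ0 t j)
    rw [max_eq_left (by linarith)]
    have : x t j - v ≤ max (x t j - v) 0 := le_max_left _ _
    linarith
  have hmassmono : ∀ (w w' : ℝ) t, w' ≤ w → Nm' w t ≤ Nm w' t := by
    intro w w' t hw
    apply Finset.sum_le_sum_of_subset_of_nonneg
    · intro j hj
      rw [Finset.mem_filter] at hj ⊢
      exact ⟨hj.1, hw.trans hj.2.le⟩
    · intro j _ _; exact hπ0 t j
  have hNm'le : ∀ (w : ℝ) t, Nm' w t ≤ (n : ℝ) := by
    intro w t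
    rw [← hπtot t]
    apply Finset.sum_le_sum_of_subset_of_nonneg (Finset.filter_subset _ _)
    intro j _ _; exact hπ0 t j
  have hmassband : ∀ (c1 c2 : ℝ) t, c1 ≤ c2 → c1 ≤ x t i → x t i ≤ c2 →
      p + Nm' c2 t ≤ Nm c1 t := by
    intro c1 c2 t h12 hb1 hb2
    have hnotmem : i ∉ Finset.univ.filter (fun j => c2 < x t j) := by
      simp [not_lt.2 hb2]
    have hsub : insert i (Finset.univ.filter (fun j => c2 < x t j)) ⊆
        Finset.univ.filter (fun j => c1 ≤ x t j) := by
      intro j hj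
      rcases Finset.mem_insert.1 hj with rfl | hj'
      · simp [hb1]
      · rw [Finset.mem_filter] at hj' ⊢
        exact ⟨hj'.1, (h12.trans_lt hj'.2).le⟩
    calc p + Nm' c2 t ≤ π t i + Nm' c2 t := by linarith [hπlb t i]
      _ = ∑ j ∈ insert i (Finset.univ.filter (fun j => c2 < x t j)), π t j :=
          (Finset.sum_insert hnotmem).symm
      _ ≤ Nm c1 t := Finset.sum_le_sum_of_subset_of_nonneg hsub (fun j _ _ => hπ0 t j)
  -- limits of the potentials
  have hGex : ∀ c : ℝ, ∃ L, Tendsto (gfn π x c) atTop (nhds L) :=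
    fun c => g_tendsto hnonneg hrow hx hπlb hp hπrec c
  choose G hG using hGex
  -- frequently-compare helper
  have hfle : ∀ (f g : ℕ → ℝ) (a b : ℝ), Tendsto f atTop (nhds a) →
      Tendsto g atTop (nhds b) → (∃ᶠ t in atTop, f t ≤ g t) → a ≤ b := by
    intro f g a b hf hg hfr
    by_contra hab
    push_neg at hab
    have h1 := hg.eventually_lt_const (show b < (a+b)/2 by linarith)
    have h2 := hf.eventually_const_lt (show (a+b)/2 < a by linarith)
    obtain ⟨t, hfg, hlt', hgt'⟩ := (hfr.and_eventually (h1.and h2)).exists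
    linarith
  -- grid
  obtain ⟨N, hN⟩ := exists_nat_gt ((n:ℝ)/p)
  have hNp : (n:ℝ) < N * p := by
    rw [div_lt_iff₀ hp] at hN
    linarith
  set δ : ℝ := (r - s)/(3*N+2) with hδdef
  have hδpos : 0 < δ := by
    apply div_pos (by linarith)
    positivity
  set cg : ℕ → ℝ := fun k => s + ((k:ℝ)+1)*δ with hcg
  have hcgk : ∀ k : ℕ, cg k = s + ((k:ℝ)+1)*δ := fun k => rfl
  have hcg_s : ∀ k, s < cg k := by
    intro k
    rw [hcgk]
    have h1 : (0:ℝ) < ((k:ℝ)+1)*δ := by positivity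
    linarith
  have hcg_step : ∀ k, cg (k+1) - cg k = δ := by
    intro k
    rw [hcgk, hcgk]
    push_cast
    ring
  have hcg_le : ∀ k l, k ≤ l → cg k ≤ cg l := by
    intro k l hkl
    rw [hcgk, hcgk]
    have h1 : ((k:ℝ)+1) ≤ ((l:ℝ)+1) := by
      have : (k:ℝ) ≤ l := by exact_mod_cast hkl
      linarith
    have := mul_le_mul_of_nonneg_right h1 hδpos.le
    linarith
  have hcg_lt : ∀ k l, k < l → cg k < cg l := by
    intro k l hkl
    have h1 : cg k ≤ cg (l-1) := hcg_le _ _ (by omega)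
    have h2 : cg ((l-1)+1) - cg (l-1) = δ := hcg_step _
    have h3 : (l-1)+1 = l := by omega
    rw [h3] at h2
    linarith
  have hcg_r : ∀ k, k ≤ 3*N → cg k < r := by
    intro k hk
    have h1 : cg k ≤ cg (3*N) := hcg_le _ _ hk
    have h2 : cg (3*N) < r := by
      rw [hcgk]
      have h3 : ((3*N : ℕ):ℝ) + 1 < 3*(N:ℝ)+2 := by push_cast; linarith
      have h4 : s + (3*(N:ℝ)+2)*δ = r := by
        rw [hδdef]
        field_simp
        ring
      have h5 := mul_lt_mul_of_pos_right h3 hδpos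
      linarith
    linarith
  -- the key decrement inequality along band-visiting times
  have hkey1 : ∀ k, k < N → δ*p + (G (cg (3*k+2)) - G (cg (3*k+3))) ≤
      G (cg (3*k)) - G (cg (3*k+1)) := by
    intro k hk
    have hbandk : ∃ᶠ t in atTop, (cg (3*k+1) ≤ x t i ∧ x t i ≤ cg (3*k+2)) :=
      hband _ _ (hcg_s _) (hcg_lt _ _ (by omega)) (hcg_r _ (by omega))
    have hineq : ∀ τ, (cg (3*k+1) ≤ x τ i ∧ x τ i ≤ cg (3*k+2)) →
        δ*p + (gfn π x (cg (3*k+2)) τ - gfn π x (cg (3*k+3)) τ) ≤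
          gfn π x (cg (3*k)) τ - gfn π x (cg (3*k+1)) τ := by
      rintro τ ⟨hb1, hb2⟩
      have h1 : (cg (3*k+1) - cg (3*k)) * Nm (cg (3*k+1)) τ ≤
          gfn π x (cg (3*k)) τ - gfn π x (cg (3*k+1)) τ :=
        hbl _ _ (hcg_le _ _ (by omega)) τ
      rw [hcg_step (3*k)] at h1
      have h2 : p + Nm' (cg (3*k+2)) τ ≤ Nm (cg (3*k+1)) τ :=
        hmassband _ _ τ (hcg_le _ _ (by omega)) hb1 hb2
      have h3 : gfn π x (cg (3*k+2)) τ - gfn π x (cg (3*k+3)) τ ≤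
          (cg (3*k+3) - cg (3*k+2)) * Nm' (cg (3*k+2)) τ :=
        hbh _ _ (hcg_le _ _ (by omega)) τ
      rw [hcg_step (3*k+2)] at h3
      have h4 : δ*(p + Nm' (cg (3*k+2)) τ) ≤ δ * Nm (cg (3*k+1)) τ :=
        mul_le_mul_of_nonneg_left h2 hδpos.le
      rw [mul_add] at h4
      linarith
    have hfr : ∃ᶠ τ in atTop,
        δ*p + (gfn π x (cg (3*k+2)) τ - gfn π x (cg (3*k+3)) τ) ≤
          gfn π x (cg (3*k)) τ - gfn π x (cg (3*k+1)) τ :=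
      hbandk.mono hineq
    exact hfle _ _ _ _
      (tendsto_const_nhds.add ((hG (cg (3*k+2))).sub (hG (cg (3*k+3)))))
      ((hG (cg (3*k))).sub (hG (cg (3*k+1)))) hfr
  -- convexity step between consecutive intervals
  have hslopeG : ∀ (u v w z : ℝ), u ≤ v → v ≤ w → w ≤ z → v - u = δ → z - w = δ →
      G w - G z ≤ G u - G v := by
    intro u v w z huv hvw hwz he1 he2
    apply le_of_tendsto_of_tendsto' ((hG w).sub (hG z)) ((hG u).sub (hG v))
    intro t
    have h1 : gfn π x w t - gfn π x z t ≤ (z - w) * Nm' w t := hbh _ _ hwz t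
    have h2 : (v - u) * Nm v t ≤ gfn π x u t - gfn π x v t := hbl _ _ huv t
    have h3 : Nm' w t ≤ Nm v t := hmassmono _ _ t hvw
    rw [he1] at h2
    rw [he2] at h1
    have h4 : δ * Nm' w t ≤ δ * Nm v t := mul_le_mul_of_nonneg_left h3 hδpos.le
    linarith
  have hkey2 : ∀ k, G (cg (3*(k+1))) - G (cg (3*(k+1)+1)) ≤
      G (cg (3*k+2)) - G (cg (3*k+3)) := by
    intro k
    have h1 : 3*(k+1) = 3*k+3 := by ring
    rw [h1]
    exact hslopeG (cg (3*k+2)) (cg (3*k+3)) (cg (3*k+3)) (cg (3*k+4))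
      (hcg_le _ _ (by omega)) le_rfl (hcg_le _ _ (by omega))
      (hcg_step (3*k+2)) (hcg_step (3*k+3))
  -- chain the decrements
  have hchain : ∀ k, k ≤ N → (k:ℝ)*(δ*p) + (G (cg (3*k)) - G (cg (3*k+1))) ≤
      G (cg 0) - G (cg 1) := by
    intro k
    induction k with
    | zero => intro _; norm_num
    | succ k ih =>
      intro hk
      have h1 := hkey1 k (by omega)
      have h2 := hkey2 k
      have h3 := ih (by omega)
      have h4 : ((k:ℝ)+1)*(δ*p) + (G (cg (3*(k+1))) - G (cg (3*(k+1)+1))) ≤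
          (k:ℝ)*(δ*p) + (G (cg (3*k)) - G (cg (3*k+1))) := by
        linarith
      push_cast
      push_cast at h3 h4
      linarith
  have hfinal0 : G (cg 0) - G (cg 1) ≤ δ * n := by
    apply le_of_tendsto_of_tendsto' ((hG (cg 0)).sub (hG (cg 1))) tendsto_const_nhds
    intro t
    have h1 : gfn π x (cg 0) t - gfn π x (cg 1) t ≤ (cg 1 - cg 0) * Nm' (cg 0) t :=
      hbh _ _ (hcg_le _ _ (by omega)) t
    rw [hcg_step 0] at h1
    have h2 : δ * Nm' (cg 0) t ≤ δ * n := mul_le_mul_of_nonneg_left (hNm'le _ t) hδpos.le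
    linarith
  have hfinalN : 0 ≤ G (cg (3*N)) - G (cg (3*N+1)) := by
    apply le_of_tendsto_of_tendsto' tendsto_const_nhds
      ((hG (cg (3*N))).sub (hG (cg (3*N+1))))
    intro t
    have h1 : (cg (3*N+1) - cg (3*N)) * Nm (cg (3*N+1)) t ≤
        gfn π x (cg (3*N)) t - gfn π x (cg (3*N+1)) t := hbl _ _ (hcg_le _ _ (by omega)) t
    rw [hcg_step (3*N)] at h1
    have h2 : 0 ≤ Nm (cg (3*N+1)) t :=
      Finset.sum_nonneg fun j _ => hπ0 t j
    nlinarith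
  have := hchain N le_rfl
  nlinarith [mul_pos hδpos (sub_pos.mpr hNp)]

lemma limits_eq
    {A : ℕ → Matrix (Fin n) (Fin n) ℝ} {x : ℕ → Fin n → ℝ} {π : ℕ → Fin n → ℝ} {p : ℝ}
    (hnonneg : ∀ t i j, 0 ≤ A t i j) (hrow : ∀ t i, ∑ j, A t i j = 1)
    (α : ℝ) (hα : 0 < α) (hlb : ∀ t i j, 0 < A t i j → α ≤ A t i j)
    (hx : ∀ t i, x (t+1) i = ∑ j, A t i j * x t j)
    (hπlb : ∀ t j, p ≤ π t j) (hp : 0 < p)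
    (hπrec : ∀ t j, π t j = ∑ k, π (t+1) k * A t k j)
    (a b : Fin n) (hinf : {t | 0 < A t b a}.Infinite)
    (La Lb : ℝ)
    (hTa : Tendsto (fun t => x t a) atTop (nhds La))
    (hTb : Tendsto (fun t => x t b) atTop (nhds Lb)) : Lb = La := by
  have hTb1 : Tendsto (fun t => x (t+1) b) atTop (nhds Lb) :=
    hTb.comp (tendsto_add_atTop_nat 1)
  have hfreq : ∃ᶠ t in atTop, 0 < A t b a := Nat.frequently_atTop_iff_infinite.mpr hinf
  by_contra hne
  rcases lt_or_gt_of_ne hne with hcase | hcase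
  · -- Lb < La
    set c : ℝ := (La + Lb)/2 with hc
    set δ : ℝ := (La - Lb)/4 with hδ
    have hδpos : 0 < δ := by rw [hδ]; linarith
    have hev1 : ∀ᶠ t in atTop, c + δ < x t a :=
      hTa.eventually_const_lt (by rw [hc, hδ]; linarith)
    have hev2 : ∀ᶠ t in atTop, x (t+1) b < c :=
      hTb1.eventually_lt_const (by rw [hc]; linarith)
    have hslk0 := slk_tendsto_zero hnonneg hrow hx hπlb hp hπrec c b
    have hev3 : ∀ᶠ t in atTop, slk A x c t b < α * δ :=
      hslk0.eventually_lt_const (by positivity)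
    obtain ⟨t, hact, h1, h2, h3⟩ := (hfreq.and_eventually (hev1.and (hev2.and hev3))).exists
    have hge : α * δ ≤ slk A x c t b := by
      calc α * δ ≤ A t b a * max (x t a - c) 0 := by
            apply mul_le_mul (hlb t b a hact) _ hδpos.le (hnonneg t b a)
            exact le_max_of_le_left (by linarith)
        _ ≤ slk A x c t b := slk_lb1 hnonneg h2.le a
    linarith
  · -- La < Lb
    set c : ℝ := (La + Lb)/2 with hc
    set δ : ℝ := (Lb - La)/4 with hδ
    have hδpos : 0 < δ := by rw [hδ]; linarith
    have hev1 : ∀ᶠ t in atTop, x t a < c - δ :=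
      hTa.eventually_lt_const (by rw [hc, hδ]; linarith)
    have hev2 : ∀ᶠ t in atTop, c < x (t+1) b :=
      hTb1.eventually_const_lt (by rw [hc]; linarith)
    have hslk0 := slk_tendsto_zero hnonneg hrow hx hπlb hp hπrec c b
    have hev3 : ∀ᶠ t in atTop, slk A x c t b < α * δ :=
      hslk0.eventually_lt_const (by positivity)
    obtain ⟨t, hact, h1, h2, h3⟩ := (hfreq.and_eventually (hev1.and (hev2.and hev3))).exists
    have hge : α * δ ≤ slk A x c t b := by
      calc α * δ ≤ A t b a * max (c - x t a) 0 := by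
            apply mul_le_mul (hlb t b a hact) _ hδpos.le (hnonneg t b a)
            exact le_max_of_le_left (by linarith)
        _ ≤ slk A x c t b := slk_lb2 hnonneg hrow hx h2.le a
    linarith

end CutBalancedProof

open Filter in
/-- For cut-balanced averaging dynamics, agents in the same strongly connected
component of the unbounded-interaction digraph reach the same limit. -/
theorem cut_balanced_same_scc_same_limit (n : ℕ)
    (A : ℕ → Matrix (Fin n) (Fin n) ℝ)
    (hnonneg : ∀ t i j, 0 ≤ A t i j)
    (hrow : ∀ t i, ∑ j, A t i j = 1)
    (α : ℝ) (hα : 0 < α) (hlb : ∀ t i j, 0 < A t i j → α ≤ A t i j)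
    (β : ℝ) (hβ : 0 < β) (hdiag : ∀ t i, β ≤ A t i i)
    (hcb : ∀ t, ∀ S : Set (Fin n), S.Nonempty → S ≠ Set.univ →
      ((∃ i ∈ S, ∃ j ∉ S, 0 < A t i j) ↔ (∃ i ∈ S, ∃ j ∉ S, 0 < A t j i)))
    (x : ℕ → Fin n → ℝ)
    (hx : ∀ t i, x (t+1) i = ∑ j, A t i j * x t j)
    -- the digraph with edge (j,i) iff `A t i j > 0` infinitely often
    (E : Fin n → Fin n → Prop)
    (hE : ∀ i j, E j i ↔ {t | 0 < A t i j}.Infinite)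
    (i j : Fin n)
    (hscc : Relation.ReflTransGen E i j ∧ Relation.ReflTransGen E j i) :
    ∃ L : ℝ, Tendsto (fun t => x t i) atTop (nhds L) ∧
      Tendsto (fun t => x t j) atTop (nhds L) := by
  classical
  open CutBalancedProof in
  -- the contraction constant
  set γ : ℝ := min (min α β) (1/2) with hγdef
  have hγpos : 0 < γ := lt_min (lt_min hα hβ) (by norm_num)
  have hγhalf : γ ≤ 1/2 := min_le_right _ _
  have hγα : γ ≤ α := (min_le_left _ _).trans (min_le_left _ _)
  have hγβ : γ ≤ β := (min_le_left _ _).trans (min_le_right _ _)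
  have hlow : ∀ t s (k : Fin n), t ≤ s → (n : ℝ) * γ ^ (n - 1) ≤ csum A t s k := by
    intro t s k hts
    have := csum_lower A hnonneg hrow α hlb β hdiag hcb γ hγpos hγhalf hγα hγβ
      (s - t) t {k} (Finset.singleton_nonempty k)
    rw [show t + (s - t) = s by omega] at this
    simpa using this
  obtain ⟨π, hπlb, hπrec, hπtot⟩ := pi_exists A hnonneg hrow γ hlow
  have hp : 0 < (n:ℝ) * γ ^ (n-1) := by
    have : 0 < n := i.pos
    positivity
  have hconv : ∀ k : Fin n, ∃ L, Tendsto (fun t => x t k) atTop (nhds L) := by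
    intro k
    exact node_converges hnonneg hrow β hβ hdiag hx hπlb hp hπrec hπtot k
  choose xl hxl using hconv
  have hedge : ∀ a b : Fin n, E a b → xl b = xl a := by
    intro a b hab
    have hinf : {t | 0 < A t b a}.Infinite := (hE b a).mp hab
    exact limits_eq hnonneg hrow α hα hlb hx hπlb hp hπrec a b hinf (xl a) (xl b) (hxl a) (hxl b)
  have hpath : ∀ b : Fin n, Relation.ReflTransGen E i b → xl b = xl i := by
    intro b h
    induction h with
    | refl => rfl
    | tail _ hbc ih => rw [hedge _ _ hbc, ih]
  refine ⟨xl i, hxl i, ?_⟩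
  rw [← hpath j hscc.1]
  exact hxl j
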